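/- Let n ≥ 6 and let G be the bipartite point–cube incidence graph whose parts are the points of F_q^n and the cubes (3-dimensional affine subspaces) of F_q^n, with an edge between a point x and a cube C exactly when x ∈ C. Then the second largest normalized singular value of G is at most 2·q^{−3/2}. -/

import Mathlib

attribute [local instance] Classical.propDecidable

instance affineSubspace_finite {F : Type} [Field F] [Fintype F] {n : ℕ} :
    Finite (AffineSubspace F (Fin n → F)) :=
  Finite.of_injective (fun C => (C : Set (Fin n → F))) SetLike.coe_injective

/-- The second largest normalized singular value of a bi-regular bipartite incidence graph with
parts `A`, `B` and incidence relation `E`: the normalized adjacency matrix `M` (with entries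
`1/√(deg a · deg b)` on edges, which is `1/√(d_A·d_B)` for a bi-regular graph) has top singular
value `1` attained on the normalized all-ones vectors, so the second largest singular value is
the operator norm of `M` minus its top rank-one component, whose entries are all
`1/√(|A|·|B|)`. -/
noncomputable def lambdaInc (A B : Type) [Fintype A] [Fintype B] (E : A → B → Prop) : ℝ :=
  ‖LinearMap.toContinuousLinearMap (Matrix.toEuclideanLin
    (Matrix.of fun (a : A) (b : B) =>
      (if E a b then
        1 / Real.sqrt ((Nat.card {b' : B // E a b'} : ℝ) * (Nat.card {a' : A // E a' b} : ℝ))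
      else 0) - 1 / Real.sqrt ((Fintype.card A : ℝ) * (Fintype.card B : ℝ))))‖

/-- A cube: a 3-dimensional affine subspace of `F^n`. -/
def IsCube (F : Type) [Field F] [Fintype F] (n : ℕ) (C : AffineSubspace F (Fin n → F)) : Prop :=
  (C : Set (Fin n → F)).Nonempty ∧ Module.finrank F C.direction = 3

noncomputable instance {F : Type} [Field F] [Fintype F] {n : ℕ} :
    Fintype {C : AffineSubspace F (Fin n → F) // IsCube F n C} :=
  Fintype.ofFinite _

section Aux

variable {F : Type} [Field F] [Fintype F] {n : ℕ}

/-- a linear automorphism taking any nonzero vector to any other -/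
lemma exists_linearEquiv_eq {V : Type} [AddCommGroup V] [Module F V]
    {v w : V} (hv : v ≠ 0) (hw : w ≠ 0) : ∃ g : V ≃ₗ[F] V, g v = w := by
  have hv' : LinearIndepOn F id ({v} : Set V) := LinearIndepOn.singleton hv
  have hw' : LinearIndepOn F id ({w} : Set V) := LinearIndepOn.singleton hw
  let b1 := Module.Basis.extend hv'
  let b2 := Module.Basis.extend hw'
  have hvmem : v ∈ hv'.extend (Set.subset_univ _) :=
    hv'.subset_extend _ (Set.mem_singleton _)
  have hwmem : w ∈ hw'.extend (Set.subset_univ _) :=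
    hw'.subset_extend _ (Set.mem_singleton _)
  let i1 : ↥(hv'.extend (Set.subset_univ _)) := ⟨v, hvmem⟩
  let i2 : ↥(hw'.extend (Set.subset_univ _)) := ⟨w, hwmem⟩
  let e0 := Module.Basis.indexEquiv b1 b2
  let e := e0.trans (Equiv.swap (e0 i1) i2)
  refine ⟨b1.equiv b2 e, ?_⟩
  have h1 : b1 i1 = v := Module.Basis.extend_apply_self _ _
  have h2 : b2 i2 = w := Module.Basis.extend_apply_self _ _
  calc (b1.equiv b2 e) v = (b1.equiv b2 e) (b1 i1) := by rw [h1]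
  _ = b2 (e i1) := b1.equiv_apply i1 b2 e
  _ = w := by simp [e, Equiv.swap_apply_left, h2]

lemma exists_affineEquiv (x y x' y' : Fin n → F) (hxy : x ≠ y) (hxy' : x' ≠ y') :
    ∃ e : (Fin n → F) ≃ᵃ[F] (Fin n → F), e x = x' ∧ e y = y' := by
  obtain ⟨g, hg⟩ := exists_linearEquiv_eq (F := F) (V := Fin n → F)
    (sub_ne_zero.2 (Ne.symm hxy)) (sub_ne_zero.2 (Ne.symm hxy'))
  refine ⟨((AffineEquiv.constVAdd F (Fin n → F) (-x)).trans g.toAffineEquiv).trans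
    (AffineEquiv.constVAdd F (Fin n → F) x'), ?_, ?_⟩
  · simp [AffineEquiv.constVAdd_apply, vadd_eq_add]
  · simp only [AffineEquiv.trans_apply, AffineEquiv.constVAdd_apply, vadd_eq_add,
      LinearEquiv.coe_toAffineEquiv]
    have : -x + y = y - x := by ring
    rw [this, hg]
    ring

lemma isCube_map (e : (Fin n → F) ≃ᵃ[F] (Fin n → F)) {C} (h : IsCube F n C) :
    IsCube F n (C.map e.toAffineMap) := by
  obtain ⟨⟨p, hp⟩, hr⟩ := h
  refine ⟨⟨e p, AffineSubspace.mem_map.2 ⟨p, hp, rfl⟩⟩, ?_⟩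
  rw [AffineSubspace.map_direction]
  have hl : (e.toAffineMap).linear = (e.linear : (Fin n → F) →ₗ[F] (Fin n → F)) := rfl
  rw [hl, LinearEquiv.finrank_map_eq e.linear C.direction]
  exact hr

/-- mapping cubes by an affine automorphism -/
noncomputable def cubeEquiv (e : (Fin n → F) ≃ᵃ[F] (Fin n → F)) :
    {C : AffineSubspace F (Fin n → F) // IsCube F n C} ≃
      {C : AffineSubspace F (Fin n → F) // IsCube F n C} where
  toFun C := ⟨C.1.map e.toAffineMap, isCube_map e C.2⟩
  invFun C := ⟨C.1.map e.symm.toAffineMap, isCube_map e.symm C.2⟩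
  left_inv C := by
    apply Subtype.ext
    apply SetLike.coe_injective
    simp [AffineSubspace.coe_map, Set.image_image, Set.preimage_image_eq _ e.injective,
      Set.image_preimage_eq _ e.surjective]
  right_inv C := by
    apply Subtype.ext
    apply SetLike.coe_injective
    simp [AffineSubspace.coe_map, Set.image_image, Set.preimage_image_eq _ e.injective,
      Set.image_preimage_eq _ e.surjective]

lemma mem_cubeEquiv (e : (Fin n → F) ≃ᵃ[F] (Fin n → F))
    (C : {C : AffineSubspace F (Fin n → F) // IsCube F n C}) (x : Fin n → F) :
    e x ∈ (cubeEquiv e C).1 ↔ x ∈ C.1 := by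
  simpa [cubeEquiv] using
    AffineSubspace.mem_map_iff_mem_of_injective (f := e.toAffineMap) (x := x) (s := C.1)
      e.injective

/-- pair counts are invariant -/
lemma card_pair_eq (x y x' y' : Fin n → F) (hxy : x ≠ y) (hxy' : x' ≠ y') :
    Nat.card {C : {C : AffineSubspace F (Fin n → F) // IsCube F n C} //
        x ∈ C.1.1 ∧ y ∈ C.1.1} =
      Nat.card {C : {C : AffineSubspace F (Fin n → F) // IsCube F n C} //
        x' ∈ C.1.1 ∧ y' ∈ C.1.1} := by
  obtain ⟨e, hex, hey⟩ := exists_affineEquiv x y x' y' hxy hxy'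
  refine Nat.card_congr (Equiv.subtypeEquiv (cubeEquiv e) fun C => ?_)
  rw [← hex, ← hey]
  exact ((mem_cubeEquiv e C x).and (mem_cubeEquiv e C y)).symm

/-- point counts are invariant -/
lemma card_point_eq (x x' : Fin n → F) :
    Nat.card {C : {C : AffineSubspace F (Fin n → F) // IsCube F n C} // x ∈ C.1.1} =
      Nat.card {C : {C : AffineSubspace F (Fin n → F) // IsCube F n C} // x' ∈ C.1.1} := by
  obtain ⟨e, hex⟩ : ∃ e : (Fin n → F) ≃ᵃ[F] (Fin n → F), e x = x' :=
    ⟨AffineEquiv.constVAdd F (Fin n → F) (x' - x), by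
      simp [AffineEquiv.constVAdd_apply, vadd_eq_add]⟩
  refine Nat.card_congr (Equiv.subtypeEquiv (cubeEquiv e) fun C => ?_)
  rw [← hex]
  exact (mem_cubeEquiv e C x).symm

/-- each cube has `q^3` points -/
lemma card_cube_pts {C : AffineSubspace F (Fin n → F)} (h : IsCube F n C) :
    Nat.card {x : Fin n → F // x ∈ C} = Fintype.card F ^ 3 := by
  obtain ⟨⟨p, hp⟩, hr⟩ := h
  have e : C.direction ≃ {x : Fin n → F // x ∈ C} :=
    { toFun := fun v => ⟨v.1 +ᵥ p, AffineSubspace.vadd_mem_of_mem_direction v.2 hp⟩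
      invFun := fun x => ⟨x.1 -ᵥ p, AffineSubspace.vsub_mem_direction x.2 hp⟩
      left_inv := fun v => by ext; simp
      right_inv := fun x => by ext; simp }
  rw [← Nat.card_congr e]
  haveI : Fintype C.direction := Fintype.ofFinite _
  rw [Nat.card_eq_fintype_card, Module.card_eq_pow_finrank (K := F) (V := C.direction), hr]

/-- there is a cube through every point -/
lemma exists_cube (hn : 3 ≤ n) (x : Fin n → F) :
    ∃ C : AffineSubspace F (Fin n → F), IsCube F n C ∧ x ∈ C := by
  have li : LinearIndependent F (fun i : Fin 3 => Pi.basisFun F (Fin n) (Fin.castLE hn i)) :=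
    (Pi.basisFun F (Fin n)).linearIndependent.comp _ (Fin.castLE_injective hn)
  refine ⟨AffineSubspace.mk' x (Submodule.span F
    (Set.range fun i : Fin 3 => Pi.basisFun F (Fin n) (Fin.castLE hn i))), ⟨?_, ?_⟩, ?_⟩
  · exact ⟨x, AffineSubspace.self_mem_mk' _ _⟩
  · rw [AffineSubspace.direction_mk', finrank_span_eq_card li, Fintype.card_fin]
  · exact AffineSubspace.self_mem_mk' _ _

end Aux

section NormBound

open Matrix
open scoped Matrix.Norms.L2Operator

/-- key operator norm bound: if `N * Nᴴ = μ • (1 - (card ι)⁻¹ • J)` then `‖N‖² ≤ μ`. -/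
lemma norm_sq_le_of_mul_conjTranspose {ι κ : Type} [Fintype ι] [Fintype κ]
    [DecidableEq ι] [DecidableEq κ] (N : Matrix ι κ ℝ) (μ : ℝ) (hμ : 0 ≤ μ)
    (h : N * Nᴴ = μ • ((1 : Matrix ι ι ℝ) -
      ((Fintype.card ι : ℝ))⁻¹ • Matrix.of (fun _ _ => (1 : ℝ)))) :
    ‖N‖ * ‖N‖ ≤ μ := by
  set a : ℝ := (Fintype.card ι : ℝ) with ha
  set K : Matrix ι ι ℝ := Matrix.of (fun _ _ => (1 : ℝ)) with hK
  set P : Matrix ι ι ℝ := (1 : Matrix ι ι ℝ) - a⁻¹ • K with hP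
  have hKK : K * K = a • K := by
    ext i j
    simp [hK, Matrix.mul_apply, Matrix.smul_apply, Finset.sum_const, ha, smul_eq_mul]
  have hX : (a⁻¹ • K) * (a⁻¹ • K) = a⁻¹ • K := by
    rw [Matrix.smul_mul, Matrix.mul_smul, hKK, smul_smul, smul_smul]
    congr 1
    rcases eq_or_ne a 0 with h0 | h0
    · simp [h0]
    · field_simp
  have hP2 : P * P = P := by
    rw [hP, sub_mul, mul_sub, mul_sub, hX]
    simp only [one_mul, mul_one]
    abel
  have hPH : P.conjTranspose = P := by
    ext i j
    simp [hP, hK, Matrix.conjTranspose_apply, Matrix.sub_apply, Matrix.smul_apply,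
      Matrix.one_apply, eq_comm]
  have hPnorm : ‖P‖ ≤ 1 := by
    have h1 := Matrix.l2_opNorm_conjTranspose_mul_self P
    rw [hPH, hP2] at h1
    nlinarith [norm_nonneg P]
  have h2 := Matrix.l2_opNorm_conjTranspose_mul_self (N.conjTranspose)
  rw [Matrix.conjTranspose_conjTranspose, Matrix.l2_opNorm_conjTranspose] at h2
  rw [h, norm_smul, Real.norm_eq_abs, abs_of_nonneg hμ] at h2
  rw [← h2]
  exact mul_le_of_le_one_right hμ hPnorm

end NormBound

section Count

variable {F : Type} [Field F] [Fintype F] {n : ℕ}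

lemma sum_ite_count {α : Type} [Fintype α] (p : α → Prop) [DecidablePred p] (z : ℝ) :
    ∑ a : α, (if p a then z else 0) = (Nat.card {a : α // p a} : ℝ) * z := by
  classical
  rw [← Finset.sum_filter, Finset.sum_const, Nat.card_eq_fintype_card, Fintype.card_subtype,
    nsmul_eq_mul]


open Matrix
open scoped Matrix.Norms.L2Operator

lemma alg_diag (a b t d c : ℝ) (ha : 0 < a) (hb : 0 < b) (ht : 0 < t) (hd : 0 < d)
    (hK2 : d * t = (a - 1) * c + d) :
    d * (1/(d*t)) - d * (1/(a*d)) - d * (1/(a*d)) + b * (1/(a*b))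
      = (d - c)/(d*t) * (1 - a⁻¹ * 1) := by
  have h1 : d * (1/(d*t)) = 1/t := by field_simp
  have h2 : d * (1/(a*d)) = 1/a := by field_simp
  have h3 : b * (1/(a*b)) = 1/a := by field_simp
  rw [h1, h2, h3]
  rw [div_mul_eq_mul_div, eq_div_iff (by positivity)]
  field_simp
  linear_combination (-1 : ℝ) * hK2

lemma alg_off (a b t d c : ℝ) (ha : 0 < a) (hb : 0 < b) (ht : 0 < t) (hd : 0 < d)
    (hK2 : d * t = (a - 1) * c + d) :
    (c : ℝ) * (1/(d*t)) - d * (1/(a*d)) - d * (1/(a*d)) + b * (1/(a*b))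
      = (d - c)/(d*t) * (0 - a⁻¹ * 1) := by
  have h2 : d * (1/(a*d)) = 1/a := by field_simp
  have h3 : b * (1/(a*b)) = 1/a := by field_simp
  rw [h2, h3]
  rw [div_mul_eq_mul_div, eq_div_iff (by positivity)]
  field_simp
  linear_combination (-1 : ℝ) * hK2

set_option maxHeartbeats 2000000 in
/-- generic bound for a bi-regular incidence structure with constant pair degrees -/
lemma lambdaInc_le {A B : Type} [Fintype A] [Fintype B] (E : A → B → Prop)
    (D c q3 : ℕ)
    (hD : ∀ x : A, Nat.card {b : B // E x b} = D)
    (hCube : ∀ b : B, Nat.card {a : A // E a b} = q3)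
    (hc : ∀ x y : A, x ≠ y → Nat.card {b : B // E x b ∧ E y b} = c)
    (hD0 : 0 < D) (hq30 : 0 < q3) (hB0 : 0 < Fintype.card B)
    (hA1 : 1 < Fintype.card A) (hq3A : q3 ≤ Fintype.card A) :
    lambdaInc A B E ≤ 2 / Real.sqrt q3 := by
  classical
  have hA0 : 0 < Fintype.card A := by omega
  -- first double count
  have e1 : (Σ b : B, {a : A // E a b}) ≃ (Σ a : A, {b : B // E a b}) :=
    { toFun := fun p => ⟨p.2.1, p.1, p.2.2⟩
      invFun := fun p => ⟨p.2.1, p.1, p.2.2⟩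
      left_inv := fun ⟨b, a, h⟩ => rfl
      right_inv := fun ⟨a, b, h⟩ => rfl }
  have K1 : Fintype.card B * q3 = Fintype.card A * D := by
    have h1 := Fintype.card_congr e1
    rw [Fintype.card_sigma, Fintype.card_sigma] at h1
    simp only [← Nat.card_eq_fintype_card, hCube, hD] at h1
    simpa [Finset.sum_const, Finset.card_univ, mul_comm] using h1
  -- second double count
  obtain ⟨x₀, y₀, hxy₀⟩ := Fintype.exists_pair_of_one_lt_card hA1
  have hally : ∀ x : A, Nat.card {b : B // E x b ∧ E x b} = D := fun x => by
    rw [← hD x]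
    exact Nat.card_congr (Equiv.subtypeEquivRight fun b => and_self_iff)
  have e2 : (Σ y : A, {b : B // E x₀ b ∧ E y b}) ≃
      (Σ b : {b : B // E x₀ b}, {a : A // E a b.1}) :=
    { toFun := fun p => ⟨⟨p.2.1, p.2.2.1⟩, p.1, p.2.2.2⟩
      invFun := fun p => ⟨p.2.1, p.1.1, p.1.2, p.2.2⟩
      left_inv := fun ⟨y, b, h⟩ => rfl
      right_inv := fun ⟨⟨b, hb⟩, a, h⟩ => rfl }
  have K2 : D * q3 = (Fintype.card A - 1) * c + D := by
    have h2 := Fintype.card_congr e2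
    rw [Fintype.card_sigma, Fintype.card_sigma] at h2
    have hr : ∑ b : {b : B // E x₀ b}, Fintype.card {a : A // E a b.1} = D * q3 := by
      have hcongr : ∀ b ∈ (Finset.univ : Finset {b : B // E x₀ b}),
          Fintype.card {a : A // E a b.1} = q3 := fun b _ => by
        rw [← Nat.card_eq_fintype_card, hCube]
      rw [Finset.sum_congr rfl hcongr, Finset.sum_const, Finset.card_univ, smul_eq_mul,
        ← Nat.card_eq_fintype_card, hD x₀]
    have hl : ∑ y : A, Fintype.card {b : B // E x₀ b ∧ E y b} =
        (Fintype.card A - 1) * c + D := by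
      rw [← Finset.sum_erase_add Finset.univ _ (Finset.mem_univ x₀)]
      congr 1
      · have hcongr : ∀ y ∈ Finset.univ.erase x₀,
            Fintype.card {b : B // E x₀ b ∧ E y b} = c := fun y hy => by
          rw [← Nat.card_eq_fintype_card, hc x₀ y (Ne.symm (Finset.mem_erase.1 hy).1)]
        rw [Finset.sum_congr rfl hcongr, Finset.sum_const, smul_eq_mul,
          Finset.card_erase_of_mem (Finset.mem_univ x₀), Finset.card_univ]
      · rw [← Nat.card_eq_fintype_card, hally x₀]
    rw [hl, hr] at h2
    exact h2.symm
  -- real versions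
  have d0 : (0:ℝ) < (D : ℝ) := by exact_mod_cast hD0
  have t0 : (0:ℝ) < (q3 : ℝ) := by exact_mod_cast hq30
  have a0 : (0:ℝ) < (Fintype.card A : ℝ) := by exact_mod_cast hA0
  have b0 : (0:ℝ) < (Fintype.card B : ℝ) := by exact_mod_cast hB0
  have a1 : (1:ℝ) < (Fintype.card A : ℝ) := by exact_mod_cast hA1
  have cr0 : (0:ℝ) ≤ (c : ℝ) := by positivity
  have hta : (q3 : ℝ) ≤ (Fintype.card A : ℝ) := by exact_mod_cast hq3A
  have hK1R : (Fintype.card B : ℝ) * q3 = (Fintype.card A : ℝ) * D := by exact_mod_cast K1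
  have hK2R : (D:ℝ) * q3 = ((Fintype.card A : ℝ) - 1) * c + D := by
    have h1le : 1 ≤ Fintype.card A := hA0
    have h := congrArg (Nat.cast : ℕ → ℝ) K2
    push_cast [Nat.cast_sub h1le] at h
    linarith [h]
  have hcd : (c : ℝ) ≤ (D : ℝ) := by nlinarith [hK2R, hta, d0, a1]
  -- the normalized matrix
  set r : ℝ := 1 / Real.sqrt ((D:ℝ) * (q3:ℝ)) with hrdef
  set s : ℝ := 1 / Real.sqrt ((Fintype.card A : ℝ) * (Fintype.card B : ℝ)) with hsdef
  set μ : ℝ := ((D:ℝ) - (c:ℝ)) / ((D:ℝ) * (q3:ℝ)) with hμdef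
  set N : Matrix A B ℝ := Matrix.of fun (x : A) (b : B) => (if E x b then r else 0) - s
    with hNdef
  have hNeq : (Matrix.of fun (x : A) (b : B) =>
      (if E x b then
        1 / Real.sqrt ((Nat.card {b' : B // E x b'} : ℝ) * (Nat.card {a' : A // E a' b} : ℝ))
      else 0) - 1 / Real.sqrt ((Fintype.card A : ℝ) * (Fintype.card B : ℝ))) = N := by
    ext x b
    rw [hNdef]
    simp only [Matrix.of_apply]
    rw [hD x, hCube b]
  have hlam : lambdaInc A B E = ‖N‖ := by
    unfold lambdaInc
    rw [hNeq, Matrix.l2_opNorm_def]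
    rfl
  -- sqrt computations
  have hrr : r * r = 1 / ((D:ℝ) * q3) := by
    rw [hrdef, div_mul_div_comm, one_mul, Real.mul_self_sqrt (by positivity)]
  have hss : s * s = 1 / ((Fintype.card A : ℝ) * (Fintype.card B : ℝ)) := by
    rw [hsdef, div_mul_div_comm, one_mul, Real.mul_self_sqrt (by positivity)]
  have hsr : s * r = 1 / ((Fintype.card A : ℝ) * (D : ℝ)) := by
    rw [hsdef, hrdef, div_mul_div_comm, one_mul, ← Real.sqrt_mul (by positivity)]
    have hsq : ((Fintype.card A : ℝ) * (Fintype.card B : ℝ)) * ((D:ℝ) * (q3:ℝ))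
        = ((Fintype.card A : ℝ) * (D:ℝ)) ^ 2 := by
      linear_combination ((Fintype.card A : ℝ) * (D:ℝ)) * hK1R
    rw [hsq, Real.sqrt_sq (by positivity)]
  -- the Gram matrix
  have hally' : ∀ x : A, (Nat.card {b : B // E x b ∧ E x b} : ℝ) = (D : ℝ) := fun x => by
    rw [hally x]
  have hNN : N * Nᴴ = μ • ((1 : Matrix A A ℝ) -
      ((Fintype.card A : ℝ))⁻¹ • Matrix.of (fun _ _ => (1 : ℝ))) := by
    ext x y
    simp only [Matrix.mul_apply, Matrix.conjTranspose_apply, star_trivial, Matrix.smul_apply,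
      Matrix.sub_apply, Matrix.one_apply, Matrix.of_apply, smul_eq_mul, hNdef]
    have expand : ∀ b : B, ((if E x b then r else 0) - s) * ((if E y b then r else 0) - s)
        = (if E x b ∧ E y b then r * r else 0) - (if E x b then s * r else 0)
          - (if E y b then s * r else 0) + s * s := by
      intro b
      by_cases h1 : E x b <;> by_cases h2 : E y b <;> simp [h1, h2] <;> ring
    rw [Finset.sum_congr rfl fun b _ => expand b]
    rw [Finset.sum_add_distrib, Finset.sum_sub_distrib, Finset.sum_sub_distrib,
      sum_ite_count, sum_ite_count, sum_ite_count, Finset.sum_const, Finset.card_univ,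
      nsmul_eq_mul, hD x, hD y]
    by_cases hxy : x = y
    · subst hxy
      rw [if_pos rfl]
      have hcnt : (Nat.card {b : B // E x b ∧ E x b} : ℝ) = (D : ℝ) := hally' x
      rw [hcnt, hrr, hss, hsr, hμdef]
      exact alg_diag _ _ _ _ _ a0 b0 t0 d0 hK2R
    · rw [if_neg hxy, hc x y hxy, hrr, hss, hsr, hμdef]
      exact alg_off _ _ _ _ _ a0 b0 t0 d0 hK2R
  have hμ0 : 0 ≤ μ := by
    rw [hμdef]
    apply div_nonneg (by linarith) (by positivity)
  have hnorm2 := norm_sq_le_of_mul_conjTranspose N μ hμ0 hNN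
  have hμt : μ * q3 ≤ 1 := by
    rw [hμdef, div_mul_eq_mul_div, div_le_one (by positivity)]
    nlinarith [cr0, d0, t0]
  rw [hlam]
  have hNpos : (0:ℝ) ≤ ‖N‖ := norm_nonneg N
  have hsq : Real.sqrt (q3:ℝ) * Real.sqrt (q3:ℝ) = (q3:ℝ) := Real.mul_self_sqrt t0.le
  have h2q : (0:ℝ) < Real.sqrt (q3:ℝ) := Real.sqrt_pos.2 t0
  have hz2 : (‖N‖ * Real.sqrt (q3:ℝ))^2 ≤ 1 := by
    rw [mul_pow, Real.sq_sqrt t0.le]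
    nlinarith [mul_le_mul_of_nonneg_right hnorm2 t0.le, hμt]
  have key : ‖N‖ * Real.sqrt (q3:ℝ) ≤ 1 := by
    nlinarith [hz2, mul_nonneg hNpos h2q.le]
  rw [le_div_iff₀ h2q]
  linarith

end Count

section MainThm

variable {F : Type} [Field F] [Fintype F] {n : ℕ}

theorem point_cube_singular_value' (hn : 6 ≤ n) :
    lambdaInc (Fin n → F) {C : AffineSubspace F (Fin n → F) // IsCube F n C}
      (fun x C => x ∈ C.1) ≤ 2 / (Fintype.card F : ℝ) ^ ((3 : ℝ) / 2) := by
  classical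
  set q := Fintype.card F with hq
  have hcardA : Fintype.card (Fin n → F) = q ^ n := by
    rw [Fintype.card_fun, Fintype.card_fin]
  have hq1 : 1 < q := Fintype.one_lt_card
  have hex : ∀ x : Fin n → F, ∃ C : {C : AffineSubspace F (Fin n → F) // IsCube F n C},
      x ∈ C.1 := by
    intro x
    obtain ⟨C, hC, hx⟩ := exists_cube (by omega) x
    exact ⟨⟨C, hC⟩, hx⟩
  have hD0 : 0 < Nat.card {C : {C : AffineSubspace F (Fin n → F) // IsCube F n C} //
      (0 : Fin n → F) ∈ C.1.1} := by
    have : Nonempty {C : {C : AffineSubspace F (Fin n → F) // IsCube F n C} //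
        (0 : Fin n → F) ∈ C.1.1} := ⟨⟨(hex 0).choose, (hex 0).choose_spec⟩⟩
    exact Nat.card_pos
  have hB0 : 0 < Fintype.card {C : AffineSubspace F (Fin n → F) // IsCube F n C} :=
    Fintype.card_pos_iff.2 ⟨(hex 0).choose⟩
  have h01 : (0 : Fin n → F) ≠ (fun _ => 1) := by
    intro h
    have := congrFun h ⟨0, by omega⟩
    exact zero_ne_one this
  have hle := lambdaInc_le (fun (x : Fin n → F) C => x ∈ C.1)
    (Nat.card {C : {C : AffineSubspace F (Fin n → F) // IsCube F n C} //
      (0 : Fin n → F) ∈ C.1.1})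
    (Nat.card {C : {C : AffineSubspace F (Fin n → F) // IsCube F n C} //
      (0 : Fin n → F) ∈ C.1.1 ∧ (fun _ => (1:F)) ∈ C.1.1})
    (q ^ 3)
    (fun x => card_point_eq x 0)
    (fun C => card_cube_pts C.2)
    (fun x y hxy => card_pair_eq x y 0 (fun _ => 1) hxy h01)
    hD0 (by exact pow_pos (by omega) 3) hB0
    (by rw [hcardA]; exact Nat.one_lt_pow (by omega) hq1)
    (by rw [hcardA]; exact Nat.pow_le_pow_right (by omega) (by omega))
  refine le_trans hle (le_of_eq ?_)
  congr 1
  push_cast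
  rw [show ((3:ℝ)/2) = (3:ℕ) * ((1:ℝ)/2) by norm_num, Real.rpow_mul (by positivity),
    Real.rpow_natCast, ← Real.sqrt_eq_rpow]

end MainThm

/-- For `n ≥ 6`, the point–cube incidence graph of `F_q^n` has second largest
normalized singular value at most `2·q^{−3/2}`. -/
theorem point_cube_singular_value {F : Type} [Field F] [Fintype F] {n : ℕ} (hn : 6 ≤ n) :
    lambdaInc (Fin n → F) {C : AffineSubspace F (Fin n → F) // IsCube F n C}
      (fun x C => x ∈ C.1) ≤ 2 / (Fintype.card F : ℝ) ^ ((3 : ℝ) / 2) :=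
  point_cube_singular_value' hn
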